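/- If G and G' are invertible complex matrices (of sizes r×r and r'×r'), K = norm log G and K' = norm log G' are their normalised logarithms (i.e. K satisfies exp(2πiK) = G and every eigenvalue μ of K has Re(μ) ∈ [0,1), similarly for K'), and C is an r×r' complex matrix with GC = CG', then KC = CK'. -/

import Mathlib

open Complex Matrix Polynomial NormedSpace
open scoped Nat
set_option maxHeartbeats 1000000

namespace NormLogAux

/-- A root of the minimal polynomial of a matrix lies in its spectrum. -/
lemma mem_spectrum_of_isRoot_minpoly {n : ℕ} (K : Matrix (Fin n) (Fin n) ℂ) (μ : ℂ)
    (h : (minpoly ℂ K).IsRoot μ) : μ ∈ spectrum ℂ K := by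
  rw [← AlgEquiv.spectrum_eq (Matrix.toLinAlgEquiv (Pi.basisFun ℂ (Fin n))) K]
  refine Module.End.HasEigenvalue.mem_spectrum ?_
  rw [Module.End.hasEigenvalue_iff_isRoot]
  rwa [minpoly.algEquiv_eq (Matrix.toLinAlgEquiv (Pi.basisFun ℂ (Fin n))) K]

/-- Sylvester-type lemma: if `K Y = Y (K' + d•1)` with `Y ≠ 0` then the spectra of `K`
and `K'` contain points differing by `d`. -/
lemma sylvester {n n' : ℕ} (K : Matrix (Fin n) (Fin n) ℂ) (K' : Matrix (Fin n') (Fin n') ℂ)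
    (d : ℂ) (Y : Matrix (Fin n) (Fin n') ℂ) (hY : Y ≠ 0)
    (h : K * Y = Y * (K' + d • 1)) :
    ∃ μ ∈ spectrum ℂ K, μ - d ∈ spectrum ℂ K' := by
  by_contra hcon
  push_neg at hcon
  set B := K' + d • (1 : Matrix (Fin n') (Fin n') ℂ) with hB
  have hpow : ∀ m : ℕ, K ^ m * Y = Y * B ^ m := by
    intro m
    induction m with
    | zero => simp
    | succ m ih => rw [pow_succ, pow_succ, Matrix.mul_assoc, h, ← Matrix.mul_assoc, ih, Matrix.mul_assoc]
  have hq : ∀ q : ℂ[X], (aeval K q) * Y = Y * aeval B q := by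
    intro q
    induction q using Polynomial.induction_on' with
    | add p q hp hq' => rw [map_add, map_add, Matrix.add_mul, Matrix.mul_add, hp, hq']
    | monomial m a =>
      rw [aeval_monomial, aeval_monomial, Algebra.algebraMap_eq_smul_one,
        Algebra.algebraMap_eq_smul_one, smul_one_mul, smul_one_mul, Matrix.smul_mul, hpow,
        Matrix.mul_smul]
  have hp0 : aeval K (minpoly ℂ K) = 0 := minpoly.aeval ℂ K
  have h0 : Y * aeval B (minpoly ℂ K) = 0 := by rw [← hq, hp0, Matrix.zero_mul]
  have hmonic : (minpoly ℂ K).Monic := minpoly.monic (Matrix.isIntegral K)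
  have hsplits : minpoly ℂ K = ((minpoly ℂ K).roots.map fun a : ℂ => X - C a).prod :=
    (IsAlgClosed.splits _).eq_prod_roots_of_monic hmonic
  have key : ∀ s : Multiset ℂ, (∀ a ∈ s, a ∈ spectrum ℂ K) →
      IsUnit (aeval B (s.map fun a : ℂ => X - C a).prod) := by
    intro s
    induction s using Multiset.induction_on with
    | empty => intro _; simp
    | cons a t ih =>
      intro hmem
      rw [Multiset.map_cons, Multiset.prod_cons, _root_.map_mul]
      have ha : a ∈ spectrum ℂ K := hmem a (Multiset.mem_cons_self a t)
      have hnot : IsUnit (algebraMap ℂ (Matrix (Fin n') (Fin n') ℂ) (a - d) - K') := by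
        have := hcon a ha
        rwa [spectrum.notMem_iff] at this
      have hfac : aeval B (X - C a) =
          -(algebraMap ℂ (Matrix (Fin n') (Fin n') ℂ) (a - d) - K') := by
        rw [map_sub, aeval_X, aeval_C, hB, Algebra.algebraMap_eq_smul_one,
          Algebra.algebraMap_eq_smul_one, sub_smul]
        abel
      exact (hfac ▸ hnot.neg).mul (ih fun b hb => hmem b (Multiset.mem_cons_of_mem hb))
  have hroots : ∀ a ∈ (minpoly ℂ K).roots, a ∈ spectrum ℂ K := fun a ha =>
    mem_spectrum_of_isRoot_minpoly K a (Polynomial.mem_roots'.mp ha).2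
  have hunit : IsUnit (aeval B (minpoly ℂ K)) := by
    rw [hsplits]
    exact key _ hroots
  obtain ⟨u, hu⟩ := hunit
  apply hY
  calc Y = Y * ((↑u : Matrix (Fin n') (Fin n') ℂ) * ↑u⁻¹) := by rw [Units.mul_inv, Matrix.mul_one]
    _ = Y * aeval B (minpoly ℂ K) * (↑u⁻¹ : Matrix (Fin n') (Fin n') ℂ) := by rw [← Matrix.mul_assoc, hu]
    _ = 0 := by rw [h0, Matrix.zero_mul]

/-- If the spectra of `K`, `K'` have real parts in `[0,1)`, `K Y - Y K' = d • Y` for some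
nonzero `Y`, and `exp (2πi d) = 1`, then `d = 0`. -/
lemma d_eq_zero {n n' : ℕ} (K : Matrix (Fin n) (Fin n) ℂ) (K' : Matrix (Fin n') (Fin n') ℂ)
    (hKspec : ∀ μ ∈ spectrum ℂ K, μ.re ∈ Set.Ico (0 : ℝ) 1)
    (hK'spec : ∀ μ ∈ spectrum ℂ K', μ.re ∈ Set.Ico (0 : ℝ) 1)
    (d : ℂ) (Y : Matrix (Fin n) (Fin n') ℂ) (hY : Y ≠ 0)
    (h : K * Y - Y * K' = d • Y)
    (hexp : Complex.exp (2 * Real.pi * Complex.I * d) = 1) : d = 0 := by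
  have h' : K * Y = Y * (K' + d • 1) := by
    rw [Matrix.mul_add, Matrix.mul_smul, Matrix.mul_one, ← h]
    abel
  obtain ⟨μ, hμ, hμ'⟩ := sylvester K K' d Y hY h'
  obtain ⟨h1a, h1b⟩ := hKspec μ hμ
  obtain ⟨h2a, h2b⟩ := hK'spec _ hμ'
  rw [Complex.sub_re] at h2a h2b
  obtain ⟨m, hm⟩ := Complex.exp_eq_one_iff.mp hexp
  have hc : (2 * Real.pi * Complex.I : ℂ) ≠ 0 := by
    simp [Real.pi_ne_zero, Complex.I_ne_zero, Complex.ofReal_ne_zero]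
  have hd : d = (m : ℂ) := by
    apply mul_left_cancel₀ hc
    rw [hm]; ring
  have hre : d.re = (m : ℝ) := by rw [hd]; simp
  have hm0 : m = 0 := by
    have hlt1 : (m : ℝ) < 1 := by rw [← hre]; linarith
    have hgt : (-1 : ℝ) < (m : ℝ) := by rw [← hre]; linarith
    exact_mod_cast by
      have h1 : m < 1 := by exact_mod_cast hlt1
      have h2 : -1 < m := by exact_mod_cast hgt
      omega
  rw [hd, hm0]; simp

noncomputable abbrev rectNAG {m k : ℕ} : NormedAddCommGroup (Matrix (Fin m) (Fin k) ℂ) :=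
  { (Matrix.linftyOpNormedAddCommGroup : NormedAddCommGroup (Matrix (Fin m) (Fin k) ℂ)) with
    toMetricSpace :=
      (Matrix.linftyOpNormedAddCommGroup :
        NormedAddCommGroup (Matrix (Fin m) (Fin k) ℂ)).toMetricSpace.replaceUniformity rfl }

noncomputable abbrev rectNS {m k : ℕ} :
    @NormedSpace ℂ (Matrix (Fin m) (Fin k) ℂ) _ rectNAG.toSeminormedAddCommGroup :=
  letI : NormedAddCommGroup (Matrix (Fin m) (Fin k) ℂ) := Matrix.linftyOpNormedAddCommGroup
  letI : NormedSpace ℂ (Matrix (Fin m) (Fin k) ℂ) := Matrix.linftyOpNormedSpace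
  @NormedSpace.mk ℂ _ _ rectNAG.toSeminormedAddCommGroup Matrix.module NormedSpace.norm_smul_le

noncomputable abbrev sqNR {m : ℕ} : NormedRing (Matrix (Fin m) (Fin m) ℂ) :=
  { rectNAG (m := m) (k := m), (Matrix.linftyOpNormedRing : NormedRing (Matrix (Fin m) (Fin m) ℂ)) with }

noncomputable abbrev sqNA {m : ℕ} :
    @NormedAlgebra ℂ (Matrix (Fin m) (Fin m) ℂ) _ sqNR.toSeminormedRing :=
  letI : NormedRing (Matrix (Fin m) (Fin m) ℂ) := Matrix.linftyOpNormedRing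
  letI : NormedAlgebra ℂ (Matrix (Fin m) (Fin m) ℂ) := Matrix.linftyOpNormedAlgebra
  @NormedAlgebra.mk ℂ _ _ sqNR.toSeminormedRing (inferInstance : Algebra ℂ (Matrix (Fin m) (Fin m) ℂ))
    NormedAlgebra.norm_smul_le

section CLM

attribute [local instance] rectNAG rectNS sqNR sqNA

variable {n n' : ℕ}

/-- Left multiplication by a square matrix, as a continuous linear map on rectangular
matrices. -/
noncomputable def lmulCLM (M : Matrix (Fin n) (Fin n) ℂ) :
    Matrix (Fin n) (Fin n') ℂ →L[ℂ] Matrix (Fin n) (Fin n') ℂ :=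
  LinearMap.toContinuousLinearMap
    { toFun := fun Y => M * Y
      map_add' := fun a b => Matrix.mul_add M a b
      map_smul' := fun c x => Matrix.mul_smul M c x }

/-- Right multiplication by a square matrix, as a continuous linear map on rectangular
matrices. -/
noncomputable def rmulCLM (N : Matrix (Fin n') (Fin n') ℂ) :
    Matrix (Fin n) (Fin n') ℂ →L[ℂ] Matrix (Fin n) (Fin n') ℂ :=
  LinearMap.toContinuousLinearMap
    { toFun := fun Y => Y * N
      map_add' := fun a b => Matrix.add_mul a b N
      map_smul' := fun c x => Matrix.smul_mul c x N }

@[simp] lemma lmulCLM_apply (M : Matrix (Fin n) (Fin n) ℂ) (Y : Matrix (Fin n) (Fin n') ℂ) :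
    lmulCLM M Y = M * Y := rfl

@[simp] lemma rmulCLM_apply (N : Matrix (Fin n') (Fin n') ℂ) (Y : Matrix (Fin n) (Fin n') ℂ) :
    rmulCLM N Y = Y * N := rfl

/-- `exp` of a continuous linear map, applied pointwise, as a `tsum`. -/
lemma exp_clm_apply {F : Type*} [NormedAddCommGroup F] [NormedSpace ℂ F] [CompleteSpace F]
    (T : F →L[ℂ] F) (x : F) :
    exp T x = ∑' k : ℕ, (k !⁻¹ : ℂ) • (T ^ k) x := by
  have hs : Summable (fun k : ℕ => (k !⁻¹ : ℂ) • T ^ k) := expSeries_summable' T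
  have h := (ContinuousLinearMap.apply ℂ F x).map_tsum hs
  rw [exp_eq_tsum (𝕂 := ℂ)]
  simpa using h

/-- `exp` of a continuous linear map applied to an eigenvector. -/
lemma exp_clm_apply_eigen {F : Type*} [NormedAddCommGroup F] [NormedSpace ℂ F] [CompleteSpace F]
    (T : F →L[ℂ] F) (x : F) (lam : ℂ) (h : T x = lam • x) :
    exp T x = Complex.exp lam • x := by
  have hpow : ∀ k : ℕ, (T ^ k) x = lam ^ k • x := by
    intro k
    induction k with
    | zero => simp
    | succ k ih =>
      rw [pow_succ, ContinuousLinearMap.mul_apply, h, _root_.map_smul, ih, smul_smul, ← pow_succ']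
  have hs : Summable (fun k : ℕ => (k !⁻¹ : ℂ) * lam ^ k) := by
    simpa [smul_eq_mul] using expSeries_summable' (𝕂 := ℂ) lam
  rw [exp_clm_apply]
  calc ∑' k : ℕ, (k !⁻¹ : ℂ) • (T ^ k) x
      = ∑' k : ℕ, ((k !⁻¹ : ℂ) * lam ^ k) • x := by simp [hpow, smul_smul]
    _ = (∑' k : ℕ, (k !⁻¹ : ℂ) * lam ^ k) • x := hs.tsum_smul_const x
    _ = Complex.exp lam • x := by
        rw [Complex.exp_eq_exp_ℂ, exp_eq_tsum (𝕂 := ℂ)]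
        simp [smul_eq_mul]

lemma exp_lmulCLM (M : Matrix (Fin n) (Fin n) ℂ) (Y : Matrix (Fin n) (Fin n') ℂ) :
    exp (lmulCLM (n' := n') M) Y = exp M * Y := by
  have hpow : ∀ k : ℕ, ((lmulCLM (n' := n') M) ^ k) Y = M ^ k * Y := by
    intro k
    induction k with
    | zero => simp
    | succ k ih => rw [pow_succ', ContinuousLinearMap.mul_apply, ih, lmulCLM_apply,
        ← Matrix.mul_assoc, ← pow_succ']
  have hs : Summable (fun k : ℕ => (k !⁻¹ : ℂ) • M ^ k) := expSeries_summable' M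
  let f : Matrix (Fin n) (Fin n) ℂ →L[ℂ] Matrix (Fin n) (Fin n') ℂ :=
    LinearMap.toContinuousLinearMap
      { toFun := fun P => P * Y
        map_add' := fun a b => Matrix.add_mul a b Y
        map_smul' := fun c x => Matrix.smul_mul c x Y }
  have hf := f.map_tsum hs
  rw [exp_clm_apply, exp_eq_tsum (𝕂 := ℂ)]
  have hterm : ∀ k : ℕ, (k !⁻¹ : ℂ) • ((lmulCLM (n' := n') M) ^ k) Y = f ((k !⁻¹ : ℂ) • M ^ k) := by
    intro k
    show (k !⁻¹ : ℂ) • ((lmulCLM (n' := n') M) ^ k) Y = ((k !⁻¹ : ℂ) • M ^ k) * Y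
    rw [hpow, Matrix.smul_mul]
  rw [tsum_congr hterm, ← hf]
  rfl

lemma exp_rmulCLM (N : Matrix (Fin n') (Fin n') ℂ) (Y : Matrix (Fin n) (Fin n') ℂ) :
    exp (rmulCLM (n := n) N) Y = Y * exp N := by
  have hpow : ∀ k : ℕ, ((rmulCLM (n := n) N) ^ k) Y = Y * N ^ k := by
    intro k
    induction k with
    | zero => simp
    | succ k ih => rw [pow_succ', ContinuousLinearMap.mul_apply, ih, rmulCLM_apply,
        Matrix.mul_assoc, ← pow_succ]
  have hs : Summable (fun k : ℕ => (k !⁻¹ : ℂ) • N ^ k) := expSeries_summable' N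
  let f : Matrix (Fin n') (Fin n') ℂ →L[ℂ] Matrix (Fin n) (Fin n') ℂ :=
    LinearMap.toContinuousLinearMap
      { toFun := fun P => Y * P
        map_add' := fun a b => Matrix.mul_add Y a b
        map_smul' := fun c x => Matrix.mul_smul Y c x }
  have hf := f.map_tsum hs
  rw [exp_clm_apply, exp_eq_tsum (𝕂 := ℂ)]
  have hterm : ∀ k : ℕ, (k !⁻¹ : ℂ) • ((rmulCLM (n := n) N) ^ k) Y = f ((k !⁻¹ : ℂ) • N ^ k) := by
    intro k
    show (k !⁻¹ : ℂ) • ((rmulCLM (n := n) N) ^ k) Y = Y * ((k !⁻¹ : ℂ) • N ^ k)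
    rw [hpow, Matrix.mul_smul]
  rw [tsum_congr hterm, ← hf]
  rfl

end CLM

end NormLogAux

open NormLogAux

/-- If `K` and `K'` are the normalised logarithms of invertible matrices `G`, `G'`
(i.e. `exp (2πi K) = G` with all eigenvalues of `K` having real part in `[0,1)`),
and `C` intertwines `G` and `G'` (`G C = C G'`), then `C` intertwines `K` and `K'`. -/
theorem normLog_intertwine {r r' : ℕ}
    (G K : Matrix (Fin r) (Fin r) ℂ) (G' K' : Matrix (Fin r') (Fin r') ℂ)
    (hG : IsUnit G.det) (hG' : IsUnit G'.det)
    (hK : NormedSpace.exp (((2 * ↑Real.pi * Complex.I) : ℂ) • K) = G)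
    (hK' : NormedSpace.exp (((2 * ↑Real.pi * Complex.I) : ℂ) • K') = G')
    (hKspec : ∀ μ ∈ spectrum ℂ K, μ.re ∈ Set.Ico (0 : ℝ) 1)
    (hK'spec : ∀ μ ∈ spectrum ℂ K', μ.re ∈ Set.Ico (0 : ℝ) 1)
    (C : Matrix (Fin r) (Fin r') ℂ) (hC : G * C = C * G') :
    K * C = C * K' := by
  classical
  letI : NormedAddCommGroup (Matrix (Fin r) (Fin r') ℂ) := rectNAG
  letI : NormedSpace ℂ (Matrix (Fin r) (Fin r') ℂ) := rectNS
  letI : SeminormedRing (Matrix (Fin r) (Fin r) ℂ) := sqNR.toSeminormedRing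
  letI : NormedRing (Matrix (Fin r) (Fin r) ℂ) := sqNR
  letI : NormedAlgebra ℂ (Matrix (Fin r) (Fin r) ℂ) := sqNA
  letI : SeminormedRing (Matrix (Fin r') (Fin r') ℂ) := sqNR.toSeminormedRing
  letI : NormedRing (Matrix (Fin r') (Fin r') ℂ) := sqNR
  letI : NormedAlgebra ℂ (Matrix (Fin r') (Fin r') ℂ) := sqNA
  set c : ℂ := 2 * Real.pi * Complex.I with hcdef
  have hc : c ≠ 0 := by
    simp [hcdef, Real.pi_ne_zero, Complex.I_ne_zero, Complex.ofReal_ne_zero]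
  set M : Matrix (Fin r) (Fin r) ℂ := c • K with hMdef
  set M' : Matrix (Fin r') (Fin r') ℂ := c • K' with hM'def
  have hGK : NormedSpace.exp M = G := hK
  have hGK' : NormedSpace.exp M' = G' := hK'
  set A : Matrix (Fin r) (Fin r') ℂ →L[ℂ] Matrix (Fin r) (Fin r') ℂ :=
    lmulCLM M - rmulCLM M' with hAdef
  have hAapp : ∀ Y, A Y = M * Y - Y * M' := by
    intro Y; simp [hAdef]
  -- Step 1: exp A C = C
  have hcomm : Commute (lmulCLM (n' := r') M) (rmulCLM (n := r) M') :=
    ContinuousLinearMap.ext fun Y => by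
      simp [ContinuousLinearMap.mul_apply, Matrix.mul_assoc]
  have hnegR : -(rmulCLM (n := r) M') = rmulCLM (n := r) (-M') :=
    ContinuousLinearMap.ext fun Y => by simp [mul_neg]
  have hexpA : exp A = exp (lmulCLM (n' := r') M) * exp (-(rmulCLM (n := r) M')) := by
    rw [hAdef, sub_eq_add_neg]
    exact exp_add_of_commute_of_mem_ball (𝕂 := ℂ) hcomm.neg_right
      ((expSeries_radius_eq_top ℂ (Matrix (Fin r) (Fin r') ℂ →L[ℂ] Matrix (Fin r) (Fin r') ℂ)).symm ▸
        edist_lt_top _ _)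
      ((expSeries_radius_eq_top ℂ (Matrix (Fin r) (Fin r') ℂ →L[ℂ] Matrix (Fin r) (Fin r') ℂ)).symm ▸
        edist_lt_top _ _)
  have hexpAC : exp A C = C := by
    rw [hexpA, ContinuousLinearMap.mul_apply, hnegR, exp_rmulCLM, exp_lmulCLM, hGK,
      ← Matrix.mul_assoc, hC, Matrix.mul_assoc, ← hGK',
      ← Matrix.exp_add_of_commute M' (-M') (Commute.neg_right (Commute.refl M')), add_neg_cancel, NormedSpace.exp_zero,
      Matrix.mul_one]
  -- Step 2: the invariant subspace W
  set W : Submodule ℂ (Matrix (Fin r) (Fin r') ℂ) :=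
    LinearMap.ker ((exp A).toLinearMap - LinearMap.id) with hWdef
  have hmemW : ∀ Y, Y ∈ W ↔ exp A Y = Y := by
    intro Y
    rw [hWdef, LinearMap.mem_ker, LinearMap.sub_apply, LinearMap.id_apply, sub_eq_zero]
    exact Iff.rfl
  have hCW : C ∈ W := (hmemW C).mpr hexpAC
  have hWinv : ∀ Y ∈ W, (A.toLinearMap) Y ∈ W := by
    intro Y hY
    rw [hmemW] at hY ⊢
    have hco : Commute (exp A) A := (Commute.refl A).exp_left
    have := DFunLike.congr_fun hco.eq Y
    simp only [ContinuousLinearMap.mul_apply] at this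
    show exp A (A Y) = A Y
    rw [this, hY]
  set A' : Module.End ℂ W := A.toLinearMap.restrict hWinv with hA'def
  haveI : FiniteDimensional ℂ (Matrix (Fin r) (Fin r') ℂ) := by infer_instance
  -- Step 3: all roots of the minimal polynomial of A' are zero
  have hroots0 : ∀ a ∈ (minpoly ℂ A').roots, a = 0 := by
    intro a ha
    have hroot : (minpoly ℂ A').IsRoot a := (Polynomial.mem_roots'.mp ha).2
    have heig : Module.End.HasEigenvalue A' a := Module.End.hasEigenvalue_iff_isRoot.mpr hroot
    obtain ⟨v, hv⟩ := heig.exists_hasEigenvector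
    have hv0 : (v : Matrix (Fin r) (Fin r') ℂ) ≠ 0 := fun hz =>
      hv.2 (Submodule.coe_eq_zero.mp hz)
    have hAv : A (v : Matrix (Fin r) (Fin r') ℂ) = a • (v : Matrix (Fin r) (Fin r') ℂ) := by
      have h1 := congrArg Subtype.val hv.apply_eq_smul
      rw [hA'def, LinearMap.restrict_coe_apply, Submodule.coe_smul] at h1
      exact h1
    have hexpv : exp A (v : Matrix (Fin r) (Fin r') ℂ)
        = Complex.exp a • (v : Matrix (Fin r) (Fin r') ℂ) := exp_clm_apply_eigen A v a hAv
    have hvW : exp A (v : Matrix (Fin r) (Fin r') ℂ) = v := (hmemW _).mp v.2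
    have hexpa : Complex.exp a = 1 := by
      have h2 : (Complex.exp a - 1) • (v : Matrix (Fin r) (Fin r') ℂ) = 0 := by
        rw [sub_smul, one_smul, ← hexpv, hvW, sub_self]
      rcases smul_eq_zero.mp h2 with h3 | h3
      · exact sub_eq_zero.mp h3
      · exact absurd h3 hv0
    have hKv : K * (v : Matrix (Fin r) (Fin r') ℂ) - (v : Matrix (Fin r) (Fin r') ℂ) * K'
        = (a / c) • (v : Matrix (Fin r) (Fin r') ℂ) := by
      have h1 : c • (K * (v : Matrix (Fin r) (Fin r') ℂ)
          - (v : Matrix (Fin r) (Fin r') ℂ) * K') = a • (v : Matrix (Fin r) (Fin r') ℂ) := by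
        rw [smul_sub, ← Matrix.smul_mul, ← Matrix.mul_smul, ← hMdef, ← hM'def, ← hAapp, hAv]
      have h2 := congrArg (fun z => c⁻¹ • z) h1
      simp only [smul_smul, inv_mul_cancel₀ hc, one_smul] at h2
      rw [h2, div_eq_inv_mul]
    have hdz : a / c = 0 := by
      refine d_eq_zero K K' hKspec hK'spec (a / c) v hv0 hKv ?_
      have h4 : (2 * Real.pi * Complex.I : ℂ) * (a / c) = a := by
        rw [← hcdef]
        field_simp
      rw [h4, hexpa]
    rcases div_eq_zero_iff.mp hdz with h5 | h5
    · exact h5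
    · exact absurd h5 hc
  -- Step 4: minpoly A' = X ^ m, hence A' is nilpotent
  have hmq : (minpoly ℂ A').Monic := minpoly.monic (Algebra.IsIntegral.isIntegral (R := ℂ) A')
  have hq_eq : minpoly ℂ A' = X ^ (minpoly ℂ A').natDegree := by
    have hsp : minpoly ℂ A' = ((minpoly ℂ A').roots.map fun a : ℂ => X - Polynomial.C a).prod :=
      (IsAlgClosed.splits _).eq_prod_roots_of_monic hmq
    have hcard : Multiset.card (minpoly ℂ A').roots = (minpoly ℂ A').natDegree :=
      splits_iff_card_roots.mp (IsAlgClosed.splits _)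
    have hrepl : (minpoly ℂ A').roots.map (fun a : ℂ => X - Polynomial.C a)
        = Multiset.replicate (Multiset.card (minpoly ℂ A').roots) X := by
      apply Multiset.eq_replicate.mpr
      refine ⟨Multiset.card_map _ _, ?_⟩
      intro b hb
      obtain ⟨a, ha, rfl⟩ := Multiset.mem_map.mp hb
      rw [hroots0 a ha, map_zero, sub_zero]
    conv_lhs => rw [hsp]
    rw [hrepl, Multiset.prod_replicate, hcard]
  set m := (minpoly ℂ A').natDegree with hmdef
  have hA'm : A' ^ m = 0 := by
    have h1 := minpoly.aeval ℂ A'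
    rw [hq_eq, map_pow, aeval_X] at h1
    exact h1
  have hker : ∀ Y, (hY : Y ∈ W) → (A.toLinearMap ^ m) Y = 0 := by
    intro Y hY
    have h1 := Module.End.pow_restrict m hWinv
    have h2 : (A' ^ m) ⟨Y, hY⟩ = 0 := by rw [hA'm]; rfl
    rw [hA'def, h1] at h2
    have h3 := congrArg Subtype.val h2
    simpa [LinearMap.restrict_coe_apply] using h3
  have hpows : ∀ k, m ≤ k → (A ^ k) C = 0 := by
    intro k hk
    have h1 : (A ^ m) C = 0 := by
      have h2 := hker C hCW
      rw [Module.End.pow_apply] at h2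
      show (⇑(A ^ m)) C = 0
      rw [FunLike.coe_pow_eq_iterate]
      exact h2
    calc (A ^ k) C = (A ^ (k - m)) ((A ^ m) C) := by
          rw [← ContinuousLinearMap.mul_apply, ← pow_add]
          congr 2
          omega
      _ = 0 := by rw [h1, map_zero]
  -- Step 5: conclude A C = 0
  have hAC : A C = 0 := by
    by_contra hne
    have hP1 : (A ^ 1) C ≠ 0 := by rwa [pow_one]
    have hm1 : 1 ≤ m := by
      by_contra hcon
      exact hP1 (hpows 1 (by omega))
    set k₀ := Nat.findGreatest (fun k => (A ^ k) C ≠ 0) m with hk0def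
    have hk₀P : (A ^ k₀) C ≠ 0 :=
      Nat.findGreatest_spec (P := fun k => (A ^ k) C ≠ 0) hm1 hP1
    have hk₀1 : 1 ≤ k₀ := Nat.le_findGreatest (P := fun k => (A ^ k) C ≠ 0) hm1 hP1
    have hgt : ∀ j, k₀ < j → (A ^ j) C = 0 := by
      intro j hj
      by_cases hjm : j ≤ m
      · by_contra hne'
        exact Nat.findGreatest_is_greatest (P := fun k => (A ^ k) C ≠ 0) hj hjm hne'
      · exact hpows j (by omega)
    have hsum : C = ∑ k ∈ Finset.range (m + 1), (k !⁻¹ : ℂ) • (A ^ k) C := by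
      have h1 : exp A C = ∑' k : ℕ, (k !⁻¹ : ℂ) • (A ^ k) C := exp_clm_apply A C
      rw [hexpAC] at h1
      refine h1.trans ?_
      refine tsum_eq_sum ?_
      intro k hk
      simp only [Finset.mem_range] at hk
      rw [hpows k (by omega), smul_zero]
    have happ := congrArg (fun Y => (A ^ (k₀ - 1)) Y) hsum
    simp only [map_sum, _root_.map_smul] at happ
    have hterm : ∀ k : ℕ, (A ^ (k₀ - 1)) ((A ^ k) C) = (A ^ (k₀ - 1 + k)) C := by
      intro k
      rw [pow_add, ContinuousLinearMap.mul_apply]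
    simp only [hterm] at happ
    have hsub : ({0, 1} : Finset ℕ) ⊆ Finset.range (m + 1) := by
      intro x hx
      simp only [Finset.mem_insert, Finset.mem_singleton] at hx
      rcases hx with rfl | rfl <;> simp [Finset.mem_range] <;> omega
    have hzero : ∀ k ∈ Finset.range (m + 1), k ∉ ({0, 1} : Finset ℕ) →
        (k !⁻¹ : ℂ) • (A ^ (k₀ - 1 + k)) C = 0 := by
      intro k _ hk
      have h2 : 2 ≤ k := by
        simp only [Finset.mem_insert, Finset.mem_singleton] at hk
        omega
      rw [hgt (k₀ - 1 + k) (by omega), smul_zero]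
    rw [← Finset.sum_subset hsub hzero] at happ
    rw [Finset.sum_pair (by norm_num : (0 : ℕ) ≠ 1)] at happ
    simp only [add_zero, Nat.factorial_zero, Nat.factorial_one, Nat.cast_one, inv_one, one_smul,
      Nat.sub_add_cancel hk₀1] at happ
    exact hk₀P (left_eq_add.mp happ)
  -- Finish
  have h1 : M * C - C * M' = 0 := by rw [← hAapp]; exact hAC
  have h2 : c • (K * C - C * K') = 0 := by
    rw [smul_sub, ← Matrix.smul_mul, ← Matrix.mul_smul, ← hMdef, ← hM'def, h1]
  rcases smul_eq_zero.mp h2 with h3 | h3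
  · exact absurd h3 hc
  · exact sub_eq_zero.mp h3
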